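/- For integers d ≥ 2 and real numbers q > s ≥ 0 with d dividing q - s, one has k! · ∑_{i=0}^{⌊k/d⌋} binom((q-s)/d + i - 1, i) · binom(s + k - d·i - 1, k - d·i) ≤ k! · binom(s + k + (q-s)/d - 1, k). -/

import Mathlib

open Finset

/-- The generalized binomial coefficient `binom(x, k) = x (x-1) ⋯ (x-k+1) / k!` for real `x`. -/
noncomputable def rchoose (x : ℝ) (k : ℕ) : ℝ :=
  (∏ i ∈ Finset.range k, (x - i)) / (Nat.factorial k)

/-- The ascending factorial `x (x+1) ⋯ (x+n-1)`. -/
noncomputable def asc (x : ℝ) (n : ℕ) : ℝ := ∏ i ∈ Finset.range n, (x + i)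

lemma asc_succ (x : ℝ) (n : ℕ) : asc x (n + 1) = asc x n * (x + n) :=
  Finset.prod_range_succ _ _

lemma asc_nonneg {x : ℝ} (hx : 0 ≤ x) (n : ℕ) : 0 ≤ asc x n :=
  Finset.prod_nonneg fun i _ => by positivity

lemma prod_reflect (x : ℝ) : ∀ n : ℕ, (∏ i ∈ Finset.range n, (x + n - 1 - i)) = asc x n := by
  intro n
  induction n with
  | zero => simp [asc]
  | succ n ih =>
    rw [Finset.prod_range_succ']
    have h1 : (∏ i ∈ Finset.range n, (x + (n+1:ℕ) - 1 - ((i+1:ℕ):ℝ)))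
        = ∏ i ∈ Finset.range n, (x + n - 1 - i) := by
      apply Finset.prod_congr rfl
      intro i _
      push_cast
      ring
    rw [h1, ih, asc_succ]
    push_cast
    ring

lemma rchoose_eq_asc (x : ℝ) (n : ℕ) : rchoose (x + n - 1) n = asc x n / n.factorial := by
  rw [rchoose, ← prod_reflect x n]

/-- Chu–Vandermonde for ascending factorials. -/
lemma asc_vdm (x y : ℝ) (k : ℕ) : asc (x + y) k
    = ∑ j ∈ Finset.range (k + 1), (k.choose j : ℝ) * asc x j * asc y (k - j) := by
  induction k with
  | zero => simp [asc]
  | succ k ih =>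
    have key : ∀ j ∈ Finset.range (k+1),
        (k.choose j : ℝ) * asc x j * asc y (k-j) * (x + y + k)
        = (k.choose j : ℝ) * asc x (j+1) * asc y (k-j)
          + (k.choose j : ℝ) * asc x j * asc y (k+1-j) := by
      intro j hj
      have hjk : j ≤ k := Nat.lt_succ_iff.mp (Finset.mem_range.mp hj)
      have h2 : asc y (k+1-j) = asc y (k-j) * (y + ((k:ℝ) - j)) := by
        have he : k+1-j = (k-j)+1 := by omega
        rw [he, asc_succ, Nat.cast_sub hjk]
      rw [asc_succ, h2]
      ring
    have hstep : asc (x+y) (k+1)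
        = (∑ j ∈ Finset.range (k+1), (k.choose j : ℝ) * asc x (j+1) * asc y (k-j))
          + ∑ j ∈ Finset.range (k+1), (k.choose j : ℝ) * asc x j * asc y (k+1-j) := by
      rw [asc_succ, ih, Finset.sum_mul, ← Finset.sum_add_distrib]
      exact Finset.sum_congr rfl key
    rw [hstep]
    have hS2 : (∑ j ∈ Finset.range (k+1), (k.choose j : ℝ) * asc x j * asc y (k+1-j))
        = ∑ j ∈ Finset.range (k+2), (k.choose j : ℝ) * asc x j * asc y (k+1-j) := by
      rw [Finset.sum_range_succ (n := k+1)]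
      simp [Nat.choose_succ_self]
    have hS2' : (∑ j ∈ Finset.range (k+2), (k.choose j : ℝ) * asc x j * asc y (k+1-j))
        = (∑ j ∈ Finset.range (k+1), (k.choose (j+1) : ℝ) * asc x (j+1) * asc y (k-j))
          + (k.choose 0 : ℝ) * asc x 0 * asc y (k+1) := by
      rw [Finset.sum_range_succ' (n := k+1)]
      congr 1
      apply Finset.sum_congr rfl
      intro j _
      have : k + 1 - (j+1) = k - j := by omega
      rw [this]
    rw [Finset.sum_range_succ' (n := k+1)]
    have hgoal : ∀ j ∈ Finset.range (k+1),
        ((k+1).choose (j+1) : ℝ) * asc x (j+1) * asc y (k+1-(j+1))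
        = (k.choose j : ℝ) * asc x (j+1) * asc y (k-j)
          + (k.choose (j+1) : ℝ) * asc x (j+1) * asc y (k-j) := by
      intro j _
      have h1 : (k+1).choose (j+1) = k.choose j + k.choose (j+1) := Nat.choose_succ_succ k j
      have h2 : k + 1 - (j+1) = k - j := by omega
      rw [h1, h2]
      push_cast
      ring
    rw [Finset.sum_congr rfl hgoal, Finset.sum_add_distrib, hS2, hS2']
    simp [asc]
    ring

/-- `asc x n / n!` is monotone in `n` for `x ≥ 1`. -/
lemma asc_div_fact_mono {x : ℝ} (hx : 1 ≤ x) {a b : ℕ} (hab : a ≤ b) :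
    asc x a / a.factorial ≤ asc x b / b.factorial := by
  induction b, hab using Nat.le_induction with
  | base => exact le_refl _
  | succ n hn ih =>
    refine le_trans ih ?_
    have hx0 : (0:ℝ) ≤ x := le_trans zero_le_one hx
    have heq : asc x (n+1) / (n+1).factorial
        = asc x n / n.factorial * ((x + n) / (n + 1)) := by
      rw [asc_succ, Nat.factorial_succ, Nat.cast_mul, div_mul_div_comm]
      push_cast
      rw [mul_comm ((n:ℝ)+1)]
    rw [heq]
    refine le_mul_of_one_le_right ?_ ?_
    · exact div_nonneg (asc_nonneg hx0 n) (Nat.cast_nonneg _)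
    · rw [le_div_iff₀ (by positivity)]
      have : (n:ℝ) + 1 ≤ x + n := by linarith
      linarith

/-- For integers `d ≥ 2` and reals `q > s ≥ 0` with `d` dividing `q - s`,
`k! ∑_{i=0}^{⌊k/d⌋} binom((q-s)/d + i - 1, i) binom(s + k - d i - 1, k - d i)
  ≤ k! binom(s + k + (q-s)/d - 1, k)`. -/
theorem stmt5 (k d : ℕ) (hd : 2 ≤ d) (q s : ℝ) (hs : 0 ≤ s) (hq : s < q)
    (hdiv : ∃ m : ℕ, q - s = d * m) :
    (Nat.factorial k : ℝ) * ∑ i ∈ Finset.range (k / d + 1),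
        rchoose ((q - s) / d + i - 1) i * rchoose (s + k - d * i - 1) (k - d * i)
      ≤ (Nat.factorial k : ℝ) * rchoose (s + k + (q - s) / d - 1) k := by
  obtain ⟨m, hm⟩ := hdiv
  have hd0 : (0:ℝ) < d := by
    have : (2:ℝ) ≤ d := by exact_mod_cast hd
    linarith
  have hK : (q - s) / d = (m:ℝ) := by
    rw [hm]; field_simp
  have hm1 : 1 ≤ (m:ℝ) := by
    have hpos : (0:ℝ) < d * m := by rw [← hm]; linarith
    have : m ≠ 0 := by
      rintro rfl; simp at hpos
    exact_mod_cast Nat.one_le_iff_ne_zero.mpr this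
  have hm0 : (0:ℝ) ≤ m := le_trans zero_le_one hm1
  rw [hK]
  apply mul_le_mul_of_nonneg_left _ (Nat.cast_nonneg _)
  -- the general term of the full Vandermonde sum
  set G : ℕ → ℝ := fun j => asc (m:ℝ) j / j.factorial * (asc s (k-j) / (k-j).factorial) with hG
  have hGnonneg : ∀ j, 0 ≤ G j := fun j => by
    exact mul_nonneg (div_nonneg (asc_nonneg hm0 _) (Nat.cast_nonneg _))
      (div_nonneg (asc_nonneg hs _) (Nat.cast_nonneg _))
  -- RHS equals the full sum
  have hRHS : rchoose (s + k + m - 1) k = ∑ j ∈ Finset.range (k+1), G j := by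
    have h1 : s + (k:ℝ) + m - 1 = ((m:ℝ) + s) + k - 1 := by ring
    rw [h1, rchoose_eq_asc, asc_vdm]
    rw [Finset.sum_div]
    apply Finset.sum_congr rfl
    intro j hj
    have hjk : j ≤ k := Nat.lt_succ_iff.mp (Finset.mem_range.mp hj)
    have hfact : (k.choose j : ℝ) * j.factorial * (k-j).factorial = k.factorial := by
      exact_mod_cast congrArg (Nat.cast (R := ℝ)) (Nat.choose_mul_factorial_mul_factorial hjk)
    have hj0 : (0:ℝ) < j.factorial := by exact_mod_cast j.factorial_pos
    have hkj0 : (0:ℝ) < (k-j).factorial := by exact_mod_cast (k-j).factorial_pos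
    have hk0 : (0:ℝ) < k.factorial := by exact_mod_cast k.factorial_pos
    rw [hG]
    field_simp
    rw [← hfact]
    ring
  rw [hRHS]
  -- LHS terms are bounded by G (d * i)
  have hstep1 : ∑ i ∈ Finset.range (k / d + 1),
      rchoose ((m:ℝ) + i - 1) i * rchoose (s + k - d * i - 1) (k - d * i)
      ≤ ∑ i ∈ Finset.range (k / d + 1), G (d * i) := by
    apply Finset.sum_le_sum
    intro i hi
    have hik : d * i ≤ k := by
      have : i ≤ k / d := Nat.lt_succ_iff.mp (Finset.mem_range.mp hi)
      calc d * i ≤ d * (k / d) := Nat.mul_le_mul_left d this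
        _ ≤ k := Nat.mul_div_le k d
    have harg : s + (k:ℝ) - (d:ℝ) * i - 1 = s + ((k - d*i : ℕ):ℝ) - 1 := by
      rw [Nat.cast_sub hik]; push_cast; ring
    rw [harg, rchoose_eq_asc, rchoose_eq_asc, hG]
    apply mul_le_mul_of_nonneg_right
    · exact asc_div_fact_mono hm1 (Nat.le_mul_of_pos_left i (by omega))
    · exact div_nonneg (asc_nonneg hs _) (Nat.cast_nonneg _)
  refine le_trans hstep1 ?_
  -- reindex and bound by the full sum
  have hinj : Set.InjOn (fun i => d * i) (Finset.range (k/d+1)) := by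
    intro a _ b _ hab
    have hd0' : d ≠ 0 := by omega
    exact Nat.eq_of_mul_eq_mul_left (by omega) hab
  rw [← Finset.sum_image hinj]
  apply Finset.sum_le_sum_of_subset_of_nonneg
  · intro j hj
    simp only [Finset.mem_image, Finset.mem_range] at hj ⊢
    obtain ⟨i, hi, rfl⟩ := hj
    have : d * i ≤ k := by
      calc d * i ≤ d * (k / d) := Nat.mul_le_mul_left d (by omega)
        _ ≤ k := Nat.mul_div_le k d
    omega
  · intro j _ _
    exact hGnonneg j
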